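/- For every positive integer d there exists a polynomial α_d ∈ ℤ[x₁, …, x_d] of degree at most d − 1 in each variable, with constant term α_d(0, …, 0) = 1 and with the coefficient of (x₁ x₂ ⋯ x_d)^{d−1} equal to (−1)^{d−1}, such that the identity of multivariate formal power series A_d(x₁, …, x_d) · ∏_{r=1}^{d} (1 − x₁ x₂ ⋯ x_r) = α_d(x₁, …, x_d) holds. -/

import Mathlib

open scoped Classical

/-- `Amv d` is the multivariate formal power series
`A_d(x₁, …, x_d) = ∑_{k₁≥0} ∑_{k₂=0}^{k₁+1} ⋯ ∑_{k_d=0}^{k_{d-1}+1} x₁^{k₁} ⋯ x_d^{k_d}`: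
the coefficient of `x₁^{k₁}⋯x_d^{k_d}` is `1` if `k_j ≤ k_{j-1} + 1` for all
`j ∈ {2, …, d}` and `0` otherwise. -/
noncomputable def Amv (d : ℕ) : MvPowerSeries (Fin d) ℤ := fun m =>
  if ∀ i : Fin d, ∀ h : i.val + 1 < d, m ⟨i.val + 1, h⟩ ≤ m i + 1 then 1 else 0

namespace AmvAux

open Finset

lemma natkey (μ : ℕ → ℕ) (a : ℕ) : ∀ b, a ≤ b →
    (∀ j, a ≤ j → j < b → μ (j+1) ≤ μ j + 1) →
    μ b + ((Finset.Ico a b).filter (fun k => μ (k+1) ≤ μ k)).card ≤ μ a + (b - a) := by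
  intro b
  induction b with
  | zero => intro h _; have : a = 0 := by omega
            subst this; simp
  | succ b ih =>
    intro hab hstep
    rcases Nat.lt_or_ge a (b+1) with h | h
    · have hab' : a ≤ b := by omega
      have ih' := ih (by omega) (fun j h1 h2 => hstep j h1 (by omega))
      have : Finset.Ico a (b+1) = insert b (Finset.Ico a b) := by
        ext x; simp [Finset.mem_Ico]; omega
      rw [this, Finset.filter_insert]
      by_cases hP : μ (b+1) ≤ μ b
      · rw [if_pos hP, Finset.card_insert_of_notMem (by simp)]
        omega
      · rw [if_neg hP]
        have := hstep b hab' (by omega)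
        omega
    · have : a = b+1 := by omega
      subst this; simp

variable {d : ℕ}

def Adm (d : ℕ) (μ : Fin d →₀ ℕ) : Prop :=
  ∀ i : Fin d, ∀ h : i.val + 1 < d, μ ⟨i.val + 1, h⟩ ≤ μ i + 1

lemma Amv_eq (d : ℕ) (μ : Fin d →₀ ℕ) : Amv d μ = if Adm d μ then 1 else 0 := by
  by_cases h : Adm d μ
  · rw [if_pos h]; exact if_pos h
  · rw [if_neg h]; exact if_neg h

noncomputable def ES (d : ℕ) (S : Finset (Fin d)) : Fin d →₀ ℕ :=
  ∑ r ∈ S, ∑ i ∈ Finset.univ.filter (fun i : Fin d => i ≤ r), Finsupp.single i 1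

lemma ES_apply (S : Finset (Fin d)) (i : Fin d) :
    ES d S i = (S.filter fun r => i ≤ r).card := by
  rw [ES, Finset.sum_apply', Finset.card_filter]
  refine Finset.sum_congr rfl fun r hr => ?_
  rw [Finset.sum_apply']
  simp [Finsupp.single_apply]

lemma ES_anti (S : Finset (Fin d)) {i i' : Fin d} (h : i ≤ i') :
    ES d S i' ≤ ES d S i := by
  rw [ES_apply, ES_apply]
  refine Finset.card_le_card fun r hr => ?_
  rw [Finset.mem_filter] at hr ⊢
  exact ⟨hr.1, le_trans h hr.2⟩

lemma ES_le_card (S : Finset (Fin d)) (i : Fin d) : ES d S i ≤ S.card := by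
  rw [ES_apply]; exact Finset.card_le_card (Finset.filter_subset _ _)

lemma ES_zero_apply (hd : 0 < d) (S : Finset (Fin d)) : ES d S ⟨0, hd⟩ = S.card := by
  rw [ES_apply]
  congr 1
  refine Finset.filter_true_of_mem fun r _ => ?_
  exact Fin.mk_le_mk.mpr (Nat.zero_le _)

/-- succ-step of ES : difference at most one -/
lemma ES_succ (S : Finset (Fin d)) (j : Fin d) (h : j.val + 1 < d) :
    ES d S j ≤ ES d S ⟨j.val + 1, h⟩ + 1 := by
  rw [ES_apply, ES_apply]
  have hsub : S.filter (fun r => j ≤ r) ⊆ insert j (S.filter fun r => (⟨j.val+1, h⟩ : Fin d) ≤ r) := by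
    intro r hr
    rw [Finset.mem_filter] at hr
    rcases eq_or_lt_of_le hr.2 with he | hlt
    · simp [← he]
    · exact Finset.mem_insert_of_mem (Finset.mem_filter.mpr ⟨hr.1, by
        rw [Fin.mk_le_mk]; exact hlt⟩)
  calc (S.filter fun r => j ≤ r).card ≤ _ := Finset.card_le_card hsub
    _ ≤ _ := Finset.card_insert_le _ _

lemma ES_succ_mem (S : Finset (Fin d)) (j : Fin d) (h : j.val + 1 < d) (hj : j ∈ S) :
    ES d S j = ES d S ⟨j.val + 1, h⟩ + 1 := by
  rw [ES_apply, ES_apply]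
  have : S.filter (fun r => j ≤ r) = insert j (S.filter fun r => (⟨j.val+1, h⟩ : Fin d) ≤ r) := by
    ext r
    simp only [Finset.mem_filter, Finset.mem_insert]
    constructor
    · rintro ⟨h1, h2⟩
      rcases eq_or_lt_of_le h2 with he | hlt
      · exact Or.inl he.symm
      · exact Or.inr ⟨h1, Fin.mk_le_mk.mpr hlt⟩
    · rintro (rfl | ⟨h1, h2⟩)
      · exact ⟨hj, le_refl _⟩
      · refine ⟨h1, le_trans ?_ h2⟩
        rw [Fin.le_def]; simp
  rw [this, Finset.card_insert_of_notMem (fun hc => by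
    have := (Finset.mem_filter.mp hc).2; rw [Fin.le_def] at this; exact Nat.not_succ_le_self _ this)]

lemma ES_succ_not_mem (S : Finset (Fin d)) (j : Fin d) (h : j.val + 1 < d) (hj : j ∉ S) :
    ES d S j = ES d S ⟨j.val + 1, h⟩ := by
  rw [ES_apply, ES_apply]
  congr 1
  ext r
  simp only [Finset.mem_filter]
  constructor
  · rintro ⟨h1, h2⟩
    refine ⟨h1, ?_⟩
    rcases eq_or_lt_of_le h2 with he | hlt
    · exact absurd (he ▸ h1) hj
    · exact Fin.mk_le_mk.mpr hlt
  · rintro ⟨h1, h2⟩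
    refine ⟨h1, le_trans ?_ h2⟩
    rw [Fin.le_def]; simp

lemma ES_insert (S : Finset (Fin d)) (t : Fin d) (ht : t ∉ S) (i : Fin d) :
    ES d (insert t S) i = ES d S i + if i ≤ t then 1 else 0 := by
  rw [ES_apply, ES_apply, Finset.filter_insert]
  by_cases h : i ≤ t
  · rw [if_pos h, if_pos h, Finset.card_insert_of_notMem (fun hc => ht (Finset.mem_filter.mp hc).1)]
  · rw [if_neg h, if_neg h, add_zero]

lemma prod_monomial (s : Finset (Fin d)) (f : Fin d → (Fin d →₀ ℕ)) (a : ℤ) :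
    ∏ r ∈ s, (MvPowerSeries.monomial (f r) a) =
      MvPowerSeries.monomial (∑ r ∈ s, f r) (a ^ s.card) := by
  induction s using Finset.cons_induction with
  | empty => simp [MvPowerSeries.monomial_zero_one]
  | cons x s hx ih =>
    rw [Finset.prod_cons, ih, Finset.sum_cons, MvPowerSeries.monomial_mul_monomial,
      Finset.card_cons, pow_succ, mul_comm a _]

lemma prod_X_eq (s : Finset (Fin d)) :
    ∏ i ∈ s, (MvPowerSeries.X i : MvPowerSeries (Fin d) ℤ) =
      MvPowerSeries.monomial (∑ i ∈ s, Finsupp.single i 1) 1 := by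
  have : ∀ i : Fin d, (MvPowerSeries.X i : MvPowerSeries (Fin d) ℤ) =
      MvPowerSeries.monomial (Finsupp.single i 1) 1 := fun i => rfl
  calc ∏ i ∈ s, (MvPowerSeries.X i : MvPowerSeries (Fin d) ℤ)
      = ∏ i ∈ s, MvPowerSeries.monomial (Finsupp.single i 1) 1 :=
        Finset.prod_congr rfl fun i _ => this i
    _ = _ := by rw [prod_monomial, one_pow]

lemma Q_eq :
    (∏ r : Fin d, (1 - ∏ i ∈ Finset.univ.filter (fun i : Fin d => i ≤ r),
        (MvPowerSeries.X i : MvPowerSeries (Fin d) ℤ))) =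
      ∑ S ∈ (Finset.univ : Finset (Fin d)).powerset,
        MvPowerSeries.monomial (ES d S) ((-1) ^ S.card) := by
  have h1 : ∀ r : Fin d, (1 - ∏ i ∈ Finset.univ.filter (fun i : Fin d => i ≤ r),
      (MvPowerSeries.X i : MvPowerSeries (Fin d) ℤ)) =
      (MvPowerSeries.monomial (∑ i ∈ Finset.univ.filter (fun i : Fin d => i ≤ r),
        Finsupp.single i 1) (-1)) + 1 := by
    intro r
    rw [prod_X_eq]
    rw [sub_eq_neg_add, ← map_neg]
  rw [Finset.prod_congr rfl fun r _ => h1 r, Finset.prod_add]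
  refine Finset.sum_congr rfl fun S _ => ?_
  rw [Finset.prod_const_one, mul_one, prod_monomial]
  rfl

noncomputable def cc (d : ℕ) (m : Fin d →₀ ℕ) : ℤ :=
  ∑ S ∈ (Finset.univ : Finset (Fin d)).powerset,
    (-1) ^ S.card * (if ES d S ≤ m ∧ Adm d (m - ES d S) then 1 else 0)

lemma coeff_AQ (m : Fin d →₀ ℕ) :
    MvPowerSeries.coeff m (Amv d * (∏ r : Fin d,
        (1 - ∏ i ∈ Finset.univ.filter (fun i : Fin d => i ≤ r), MvPowerSeries.X i))) =
      cc d m := by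
  rw [Q_eq, Finset.mul_sum, map_sum, cc]
  refine Finset.sum_congr rfl fun S _ => ?_
  rw [MvPowerSeries.coeff_mul_monomial]
  by_cases h : ES d S ≤ m
  · rw [if_pos h, MvPowerSeries.coeff_apply, Amv_eq]
    by_cases h2 : Adm d (m - ES d S)
    · rw [if_pos h2, if_pos ⟨h, h2⟩, one_mul, mul_one]
    · rw [if_neg h2, if_neg (fun hc => h2 hc.2), zero_mul, mul_zero]
  · rw [if_neg h, if_neg (fun hc => h hc.1), mul_zero]

lemma cc_zero (hd : 0 < d) : cc d 0 = 1 := by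
  rw [cc, Finset.sum_eq_single ∅]
  · have h0 : ES d ∅ = 0 := by
      ext i; rw [ES_apply]; simp
    rw [h0]
    rw [if_pos ⟨le_refl _, by intro i h; simp⟩]
    simp
  · intro S _ hS
    rw [if_neg, mul_zero]
    rintro ⟨h1, -⟩
    have := h1 ⟨0, hd⟩
    rw [ES_zero_apply hd] at this
    simp only [Finsupp.coe_zero, Pi.zero_apply, Nat.le_zero] at this
    exact hS (Finset.card_eq_zero.mp this)
  · intro h
    exact absurd (Finset.empty_mem_powerset _) h

lemma cc_top (hd : 0 < d) :
    cc d (Finsupp.equivFunOnFinite.symm fun _ : Fin d => d - 1) = (-1) ^ (d - 1) := by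
  set D : Fin d →₀ ℕ := Finsupp.equivFunOnFinite.symm fun _ : Fin d => d - 1 with hD
  have hDi : ∀ i : Fin d, D i = d - 1 := fun i => rfl
  have hcond : ∀ S ∈ (Finset.univ : Finset (Fin d)).powerset,
      (if ES d S ≤ D ∧ Adm d (D - ES d S) then (1:ℤ) else 0) =
      (if S = Finset.univ then 0 else 1) := by
    intro S _
    by_cases hS : S = Finset.univ
    · subst hS
      rw [if_pos rfl, if_neg]
      rintro ⟨h1, -⟩
      have := h1 ⟨0, hd⟩
      rw [ES_zero_apply hd, hDi] at this
      rw [Finset.card_univ, Fintype.card_fin] at this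
      omega
    · rw [if_neg hS, if_pos]
      have hcard : S.card < d := by
        have := Finset.card_lt_card (Finset.ssubset_univ_iff.mpr hS)
        rwa [Finset.card_univ, Fintype.card_fin] at this
      have hle : ES d S ≤ D := by
        intro i
        rw [hDi]
        have := ES_le_card S i
        omega
      refine ⟨hle, ?_⟩
      intro i h
      rw [Finsupp.tsub_apply, Finsupp.tsub_apply, hDi, hDi]
      have h1 := ES_succ S i h
      have h2 := hle i
      have h3 := hle ⟨i.val+1, h⟩
      rw [hDi] at h2 h3
      omega
  calc cc d D = ∑ S ∈ (Finset.univ : Finset (Fin d)).powerset,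
        ((-1:ℤ)^S.card - if S = Finset.univ then (-1)^d else 0) := by
        rw [cc]
        refine Finset.sum_congr rfl fun S hS => ?_
        rw [hcond S hS]
        by_cases h : S = Finset.univ
        · rw [if_pos h, if_pos h, mul_zero, h, Finset.card_univ, Fintype.card_fin, sub_self]
        · rw [if_neg h, if_neg h, mul_one, sub_zero]
    _ = (-1)^(d-1) := by
        rw [Finset.sum_sub_distrib, Finset.sum_powerset_neg_one_pow_card,
          Finset.sum_ite_eq' _ Finset.univ (fun _ => ((-1:ℤ))^d),
          if_pos (Finset.mem_powerset_self _),
          if_neg (Finset.nonempty_iff_ne_empty.mp (haveI : Nonempty (Fin d) := Fin.pos_iff_nonempty.mp hd; Finset.univ_nonempty))]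
        have h1 : d = d - 1 + 1 := by omega
        conv_lhs => rw [h1]
        rw [pow_succ]
        ring

lemma key_bound (m : Fin d →₀ ℕ) (hAdm : Adm d m) (t : Fin d) (ht1 : d ≤ m t)
    (ht2 : ∀ j : Fin d, t < j → m j < d)
    (S : Finset (Fin d)) (htS : t ∉ S)
    (hSnc : ∀ r ∈ S, ∀ h : r.val + 1 < d, m ⟨r.val + 1, h⟩ ≤ m r)
    (i : Fin d) (hi : i ≤ t) :
    ES d S i + 1 ≤ m i := by
  classical
  set μ : ℕ → ℕ := fun k => if h : k < d then m ⟨k, h⟩ else 0 with hμ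
  have hμval : ∀ j : Fin d, μ j.val = m j := by
    intro j; rw [hμ]; simp only [j.isLt, dif_pos]
  set Ti : Finset (Fin d) :=
    Finset.univ.filter (fun j : Fin d => i ≤ j ∧ ∀ h : j.val + 1 < d, m ⟨j.val + 1, h⟩ ≤ m j)
    with hTi
  have htTi : t ∈ Ti := by
    rw [hTi, Finset.mem_filter]
    refine ⟨Finset.mem_univ _, hi, fun h => ?_⟩
    have hlt : t < (⟨t.val + 1, h⟩ : Fin d) := by
      rw [Fin.lt_def]; simp
    have := ht2 _ hlt
    omega
  have step1 : S.filter (fun r => i ≤ r) ⊆ Ti.erase t := by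
    intro r hr
    rw [Finset.mem_filter] at hr
    rw [Finset.mem_erase, hTi, Finset.mem_filter]
    exact ⟨fun hc => htS (hc ▸ hr.1), Finset.mem_univ _, hr.2, hSnc r hr.1⟩
  have step2 : ES d S i + 1 ≤ Ti.card := by
    rw [ES_apply]
    have h1 := Finset.card_le_card step1
    rw [Finset.card_erase_of_mem htTi] at h1
    have h2 : 1 ≤ Ti.card := Finset.card_pos.mpr ⟨t, htTi⟩
    omega
  -- counting bound on Ti
  set N := ((Finset.Ico i.val t.val).filter (fun k => μ (k+1) ≤ μ k)).card with hN
  have hnk := natkey μ i.val t.val hi (by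
    intro j h1 h2
    have hj1 : j + 1 < d := by omega
    have hjd : j < d := by omega
    have := hAdm ⟨j, hjd⟩ hj1
    rw [hμ]; simpa only [dif_pos hj1, dif_pos hjd] using this)
  have cardA : (Finset.univ.filter (fun j : Fin d => i ≤ j ∧ j < t ∧
      ∀ h : j.val + 1 < d, m ⟨j.val + 1, h⟩ ≤ m j)).card ≤ N := by
    rw [hN]
    apply Finset.card_le_card_of_injOn Fin.val
    · intro j hj
      rw [Finset.mem_coe, Finset.mem_filter] at hj
      obtain ⟨-, hij, hjt, hnc⟩ := hj
      have hj1 : j.val + 1 < d := by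
        have := hjt; rw [Fin.lt_def] at this
        have := t.isLt; omega
      rw [Finset.mem_coe, Finset.mem_filter, Finset.mem_Ico]
      refine ⟨⟨hij, hjt⟩, ?_⟩
      have := hnc hj1
      rw [hμ]
      simp only [dif_pos hj1, dif_pos j.isLt]
      rw [Fin.eta]
      exact this
    · exact fun a _ b _ h => Fin.val_injective h
  have cardB : (Finset.univ.filter (fun j : Fin d => t ≤ j)).card ≤ d - t.val := by
    have : (Finset.univ.filter (fun j : Fin d => t ≤ j)).card ≤ (Finset.Ico t.val d).card := by
      apply Finset.card_le_card_of_injOn Fin.val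
      · intro j hj
        rw [Finset.mem_coe, Finset.mem_filter] at hj
        rw [Finset.mem_coe, Finset.mem_Ico]
        exact ⟨hj.2, j.isLt⟩
      · exact fun a _ b _ h => Fin.val_injective h
    rwa [Nat.card_Ico] at this
  have step3 : Ti.card ≤ N + (d - t.val) := by
    have hsub : Ti ⊆ (Finset.univ.filter (fun j : Fin d => i ≤ j ∧ j < t ∧
        ∀ h : j.val + 1 < d, m ⟨j.val + 1, h⟩ ≤ m j)) ∪
        (Finset.univ.filter (fun j : Fin d => t ≤ j)) := by
      intro j hj
      rw [hTi, Finset.mem_filter] at hj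
      rw [Finset.mem_union, Finset.mem_filter, Finset.mem_filter]
      rcases lt_or_ge j t with h | h
      · exact Or.inl ⟨Finset.mem_univ _, hj.2.1, h, hj.2.2⟩
      · exact Or.inr ⟨Finset.mem_univ _, h⟩
    calc Ti.card ≤ _ := Finset.card_le_card hsub
      _ ≤ _ := Finset.card_union_le _ _
      _ ≤ N + (d - t.val) := by omega
  have hμt := hμval t
  have hμi := hμval i
  have hit : i.val ≤ t.val := hi
  have htd := t.isLt
  omega


lemma adm_sub_iff (m e : Fin d →₀ ℕ) (he : e ≤ m) :
    Adm d (m - e) ↔ ∀ j : Fin d, ∀ h : j.val + 1 < d,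
      m ⟨j.val + 1, h⟩ + e j ≤ m j + e ⟨j.val + 1, h⟩ + 1 := by
  constructor
  · intro H j h
    have h1 := H j h
    rw [Finsupp.tsub_apply, Finsupp.tsub_apply] at h1
    have h2 := he j
    have h3 := he ⟨j.val + 1, h⟩
    omega
  · intro H j h
    have h1 := H j h
    rw [Finsupp.tsub_apply, Finsupp.tsub_apply]
    have h2 := he j
    have h3 := he ⟨j.val + 1, h⟩
    omega

lemma cond_iff (m : Fin d →₀ ℕ) (hAdm : Adm d m) (t : Fin d) (ht1 : d ≤ m t)
    (ht2 : ∀ j : Fin d, t < j → m j < d)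
    (S : Finset (Fin d)) (htS : t ∉ S) :
    (ES d S ≤ m ∧ Adm d (m - ES d S)) ↔
      (ES d (insert t S) ≤ m ∧ Adm d (m - ES d (insert t S))) := by
  have hE := ES_insert S t htS
  have htt : ∀ h : t.val + 1 < d, m ⟨t.val + 1, h⟩ < m t := by
    intro h
    have hlt : t < (⟨t.val + 1, h⟩ : Fin d) := by rw [Fin.lt_def]; simp
    have := ht2 _ hlt
    omega
  have het : ∀ h : t.val + 1 < d, ES d S t = ES d S ⟨t.val + 1, h⟩ :=
    fun h => ES_succ_not_mem S t h htS
  constructor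
  · rintro ⟨h1, h2⟩
    have hSnc : ∀ r ∈ S, ∀ h : r.val + 1 < d, m ⟨r.val + 1, h⟩ ≤ m r := by
      intro r hr h
      have h3 := (adm_sub_iff m (ES d S) h1).mp h2 r h
      have h4 := ES_succ_mem S r h hr
      omega
    have hkey : ∀ i : Fin d, i ≤ t → ES d S i + 1 ≤ m i :=
      key_bound m hAdm t ht1 ht2 S htS hSnc
    have h1' : ES d (insert t S) ≤ m := by
      intro i
      rw [hE i]
      by_cases hit : i ≤ t
      · rw [if_pos hit]; exact hkey i hit
      · rw [if_neg hit, add_zero]; exact h1 i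
    refine ⟨h1', ?_⟩
    rw [adm_sub_iff _ _ h1']
    intro j h
    have h3 := (adm_sub_iff m (ES d S) h1).mp h2 j h
    rw [hE j, hE ⟨j.val + 1, h⟩]
    have hj1 : ((⟨j.val + 1, h⟩ : Fin d) ≤ t) ↔ j.val + 1 ≤ t.val := by rw [Fin.le_def]
    have hj0 : (j ≤ t) ↔ j.val ≤ t.val := by rw [Fin.le_def]
    rcases Nat.lt_trichotomy j.val t.val with hc | hc | hc
    · rcases Nat.lt_or_ge j.val (t.val - 1) with hc2 | hc2
      · rw [if_pos (hj0.mpr (by omega)), if_pos (hj1.mpr (by omega))]; omega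
      · -- j.val + 1 = t.val or j.val+1 ≤ t.val
        rw [if_pos (hj0.mpr (by omega)), if_pos (hj1.mpr (by omega))]; omega
    · have hjt : j = t := Fin.ext hc
      subst hjt
      rw [if_pos (hj0.mpr (le_refl _)), if_neg (fun hcon => by rw [hj1] at hcon; omega)]
      have := htt h
      have := het h
      omega
    · rw [if_neg (fun hcon => by rw [hj0] at hcon; omega),
        if_neg (fun hcon => by rw [hj1] at hcon; omega)]
      omega
  · rintro ⟨h1, h2⟩
    have h1' : ES d S ≤ m := by
      intro i
      have := h1 i
      rw [hE i] at this
      by_cases hit : i ≤ t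
      · rw [if_pos hit] at this; omega
      · rw [if_neg hit, add_zero] at this; exact this
    refine ⟨h1', ?_⟩
    rw [adm_sub_iff _ _ h1']
    intro j h
    have h3 := (adm_sub_iff m (ES d (insert t S)) h1).mp h2 j h
    rw [hE j, hE ⟨j.val + 1, h⟩] at h3
    have hj1 : ((⟨j.val + 1, h⟩ : Fin d) ≤ t) ↔ j.val + 1 ≤ t.val := by rw [Fin.le_def]
    have hj0 : (j ≤ t) ↔ j.val ≤ t.val := by rw [Fin.le_def]
    rcases Nat.lt_trichotomy j.val t.val with hc | hc | hc
    · rw [if_pos (hj0.mpr (by omega)), if_pos (hj1.mpr (by omega))] at h3; omega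
    · have hjt : j = t := Fin.ext hc
      subst hjt
      have := htt h
      have := het h
      omega
    · rw [if_neg (fun hcon => by rw [hj0] at hcon; omega),
        if_neg (fun hcon => by rw [hj1] at hcon; omega)] at h3
      omega

lemma cc_vanish (m : Fin d →₀ ℕ) (i₀ : Fin d) (h₀ : d ≤ m i₀) : cc d m = 0 := by
  classical
  by_cases hAdm : Adm d m
  · -- pairing with the last index where m is ≥ d
    have hFne : (Finset.univ.filter (fun j : Fin d => d ≤ m j)).Nonempty :=
      ⟨i₀, Finset.mem_filter.mpr ⟨Finset.mem_univ _, h₀⟩⟩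
    obtain ⟨t, ht1, ht2⟩ : ∃ t : Fin d, d ≤ m t ∧ ∀ j : Fin d, t < j → m j < d := by
      refine ⟨(Finset.univ.filter (fun j : Fin d => d ≤ m j)).max' hFne,
        (Finset.mem_filter.mp (Finset.max'_mem _ hFne)).2, ?_⟩
      intro j hj
      by_contra hcon
      push_neg at hcon
      have hjF : j ∈ Finset.univ.filter (fun j : Fin d => d ≤ m j) :=
        Finset.mem_filter.mpr ⟨Finset.mem_univ _, hcon⟩
      have := Finset.le_max' _ j hjF
      exact absurd hj (not_lt.mpr this)
    rw [cc]
    have huniv : (Finset.univ : Finset (Fin d)) = insert t (Finset.univ.erase t) :=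
      (Finset.insert_erase (Finset.mem_univ t)).symm
    rw [huniv, Finset.sum_powerset_insert (Finset.notMem_erase t _), ← Finset.sum_add_distrib]
    apply Finset.sum_eq_zero
    intro S hS
    have htS : t ∉ S := fun hc =>
      (Finset.notMem_erase t Finset.univ) (Finset.mem_powerset.mp hS hc)
    have hcard : (insert t S).card = S.card + 1 := Finset.card_insert_of_notMem htS
    have hiff := cond_iff m hAdm t ht1 ht2 S htS
    rw [hcard, pow_succ]
    by_cases hc : ES d S ≤ m ∧ Adm d (m - ES d S)
    · rw [if_pos hc, if_pos (hiff.mp hc)]; ring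
    · rw [if_neg hc, if_neg (fun hc2 => hc (hiff.mpr hc2))]; ring
  · -- m itself not admissible : every term vanishes
    rw [cc]
    apply Finset.sum_eq_zero
    intro S _
    rw [if_neg, mul_zero]
    rintro ⟨h1, h2⟩
    unfold Adm at hAdm
    push_neg at hAdm
    obtain ⟨j, h, hgt⟩ := hAdm
    have h3 := (adm_sub_iff m (ES d S) h1).mp h2 j h
    have h4 : ES d S ⟨j.val + 1, h⟩ ≤ ES d S j :=
      ES_anti S (by rw [Fin.le_def]; simp)
    omega

end AmvAux

/-- **Lemma.** For every positive integer `d` there is a polynomial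
`α_d ∈ ℤ[x₁, …, x_d]` of degree at most `d - 1` in each variable, with constant term
`1` and coefficient of `(x₁ x₂ ⋯ x_d)^{d-1}` equal to `(-1)^{d-1}`, such that
`A_d(x₁, …, x_d) · ∏_{r=1}^{d} (1 - x₁ x₂ ⋯ x_r) = α_d(x₁, …, x_d)`. -/
theorem Amv_denominator (d : ℕ) (hd : 0 < d) :
    ∃ α : MvPolynomial (Fin d) ℤ,
      (∀ i : Fin d, α.degreeOf i ≤ d - 1) ∧
      MvPolynomial.coeff 0 α = 1 ∧
      MvPolynomial.coeff (Finsupp.equivFunOnFinite.symm fun _ : Fin d => d - 1) α = (-1) ^ (d - 1) ∧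
      Amv d * (∏ r : Fin d,
          (1 - ∏ i ∈ Finset.univ.filter (fun i : Fin d => i ≤ r), MvPowerSeries.X i)) =
        (α : MvPowerSeries (Fin d) ℤ) := by
  classical
  set D : Fin d →₀ ℕ := Finsupp.equivFunOnFinite.symm fun _ : Fin d => d - 1 with hD
  have hDi : ∀ i : Fin d, D i = d - 1 := fun i => rfl
  set α : MvPolynomial (Fin d) ℤ :=
    ∑ n ∈ Finset.Iic D, MvPolynomial.monomial n (AmvAux.cc d n) with hα
  have hcoeff : ∀ n : Fin d →₀ ℕ,
      MvPolynomial.coeff n α = if n ≤ D then AmvAux.cc d n else 0 := by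
    intro n
    rw [hα, MvPolynomial.coeff_sum]
    simp only [MvPolynomial.coeff_monomial]
    rw [Finset.sum_ite_eq' (Finset.Iic D) n (fun x => AmvAux.cc d x)]
    by_cases h : n ≤ D
    · rw [if_pos (Finset.mem_Iic.mpr h), if_pos h]
    · rw [if_neg (fun hc => h (Finset.mem_Iic.mp hc)), if_neg h]
  have hvanish : ∀ n : Fin d →₀ ℕ, ¬ n ≤ D → AmvAux.cc d n = 0 := by
    intro n hn
    rw [Finsupp.le_def] at hn
    push_neg at hn
    obtain ⟨i, hi⟩ := hn
    refine AmvAux.cc_vanish n i ?_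
    have := hDi i
    omega
  refine ⟨α, ?_, ?_, ?_, ?_⟩
  · intro i
    rw [MvPolynomial.degreeOf_le_iff]
    intro n hn
    rw [MvPolynomial.mem_support_iff, hcoeff] at hn
    by_cases h : n ≤ D
    · have := h i
      have := hDi i
      omega
    · rw [if_neg h] at hn
      exact absurd rfl hn
  · rw [hcoeff, if_pos (by intro i; simp)]
    exact AmvAux.cc_zero hd
  · rw [hcoeff, if_pos (le_refl D)]
    exact AmvAux.cc_top hd
  · ext n
    rw [AmvAux.coeff_AQ, MvPolynomial.coeff_coe, hcoeff]
    by_cases h : n ≤ D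
    · rw [if_pos h]
    · rw [if_neg h]
      exact hvanish n h
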